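/- Let N ≥ 2, let x : Fin N → ℝ^n be an injective family of unit vectors, and let m = max_{i ≠ j} ⟨x_i, x_j⟩. Suppose the code is infinitesimally jammed: every family y : Fin N → ℝ^n satisfying ⟨x_i, y_i⟩ = 0 for all i and ⟨x_i, y_j⟩ + ⟨x_j, y_i⟩ ≤ 0 for all i ≠ j with ⟨x_i, x_j⟩ = m admits a skew-symmetric linear map Φ : ℝ^n → ℝ^n (⟨Φu, v⟩ = −⟨u, Φv⟩ for all u, v) with y_i = Φ x_i for all i. Then the code is jammed: for every continuous map γ : [0,1] → (Fin N → ℝ^n) with γ(0) = x, with |γ(t)_i| = 1 for all t and i, and with ⟨γ(t)_i, γ(t)_j⟩ ≤ m for all t and all i ≠ j, one has ⟨γ(t)_i, γ(t)_j⟩ = ⟨x_i, x_j⟩ for all t, i, j. -/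

import Mathlib

open scoped RealInnerProductSpace
open NormedSpace

set_option maxHeartbeats 1000000


theorem gram_isometry {n N : ℕ} (x y : Fin N → EuclideanSpace ℝ (Fin n))
    (h : ∀ i j, ⟪y i, y j⟫ = ⟪x i, x j⟫) :
    ∃ V : EuclideanSpace ℝ (Fin n) →ₗᵢ[ℝ] EuclideanSpace ℝ (Fin n), ∀ i, V (y i) = x i := by
  let E := EuclideanSpace ℝ (Fin n)
  set Y : (Fin N → ℝ) →ₗ[ℝ] E := Fintype.linearCombination ℝ y with hY
  set X : (Fin N → ℝ) →ₗ[ℝ] E := Fintype.linearCombination ℝ x with hX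
  have key : ∀ c : Fin N → ℝ, ⟪Y c, Y c⟫ = ⟪X c, X c⟫ := by
    intro c
    have hYc : Y c = ∑ i, c i • y i := by simp [hY, Fintype.linearCombination_apply]
    have hXc : X c = ∑ i, c i • x i := by simp [hX, Fintype.linearCombination_apply]
    rw [hYc, hXc]
    rw [sum_inner, sum_inner]
    refine Finset.sum_congr rfl fun i _ => ?_
    rw [inner_sum, inner_sum]
    refine Finset.sum_congr rfl fun j _ => ?_
    rw [real_inner_smul_left, real_inner_smul_left, real_inner_smul_right,
      real_inner_smul_right, h]
  have keynorm : ∀ c : Fin N → ℝ, ‖Y c‖ = ‖X c‖ := by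
    intro c
    have := key c
    rw [real_inner_self_eq_norm_sq, real_inner_self_eq_norm_sq] at this
    nlinarith [norm_nonneg (Y c), norm_nonneg (X c)]
  have hker : LinearMap.ker Y ≤ LinearMap.ker X := by
    intro c hc
    rw [LinearMap.mem_ker] at hc ⊢
    have := keynorm c
    rw [hc, norm_zero] at this
    exact (norm_eq_zero.mp this.symm)
  set L0 : LinearMap.range Y →ₗ[ℝ] E :=
    (Submodule.liftQ (LinearMap.ker Y) X hker).comp Y.quotKerEquivRange.symm.toLinearMap with hL0
  have hL0apply : ∀ c : Fin N → ℝ, L0 ⟨Y c, LinearMap.mem_range_self Y c⟩ = X c := by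
    intro c
    have h1 : (⟨Y c, LinearMap.mem_range_self Y c⟩ : LinearMap.range Y)
        = Y.quotKerEquivRange (Submodule.Quotient.mk c) := by
      ext; simp
    rw [hL0, LinearMap.comp_apply, h1]
    simp only [LinearEquiv.coe_toLinearMap, LinearEquiv.symm_apply_apply]
    simp [Submodule.liftQ_apply]
  have hL0norm : ∀ s : LinearMap.range Y, ‖L0 s‖ = ‖s‖ := by
    rintro ⟨-, c, rfl⟩
    rw [hL0apply c, ← keynorm c]
    rfl
  set L : LinearMap.range Y →ₗᵢ[ℝ] E := ⟨L0, hL0norm⟩ with hL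
  refine ⟨L.extend, fun i => ?_⟩
  have hci : Y (Pi.single i 1) = y i := by
    rw [Fintype.linearCombination_apply_single]; simp
  have hmem : y i ∈ LinearMap.range Y := ⟨Pi.single i 1, hci⟩
  have : (⟨y i, hmem⟩ : LinearMap.range Y) = ⟨Y (Pi.single i 1), LinearMap.mem_range_self _ _⟩ :=
    Subtype.ext hci.symm
  calc L.extend (y i) = L ⟨y i, hmem⟩ := L.extend_apply ⟨y i, hmem⟩
    _ = X (Pi.single i 1) := by rw [hL]; show L0 _ = _; rw [this, hL0apply]
    _ = x i := by rw [Fintype.linearCombination_apply_single]; simp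



theorem procrustes {E : Type*} [NormedAddCommGroup E] [InnerProductSpace ℝ E]
    [FiniteDimensional ℝ E] {N : ℕ} (x q : Fin N → E) :
    ∃ q' : Fin N → E,
      (∀ i j, ⟪q' i, q' j⟫ = ⟪q i, q j⟫) ∧
      (∑ i, ‖q' i - x i‖ ^ 2 ≤ ∑ i, ‖q i - x i‖ ^ 2) ∧
      (∀ Ψ : E →L[ℝ] E, star Ψ = -Ψ →
        ∑ i, ⟪Ψ (q' i), x i⟫ = 0) := by
  classical
  haveI : CompleteSpace E := FiniteDimensional.complete ℝ E
  set 𝔸 := E →L[ℝ] E with h𝔸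
  -- the unitary group is compact
  have hclosed : IsClosed (unitary 𝔸 : Set 𝔸) := by
    have heq : (unitary 𝔸 : Set 𝔸) =
        (fun U : 𝔸 => (star U * U, U * star U)) ⁻¹' {((1 : 𝔸), (1 : 𝔸))} :=
      Set.ext fun U => by
        rw [Set.mem_preimage, Set.mem_singleton_iff, Prod.mk.injEq]
        exact Unitary.mem_iff
    rw [heq]
    exact IsClosed.preimage
      ((continuous_star.mul continuous_id).prodMk (continuous_id.mul continuous_star))
      isClosed_singleton
  have hbdd : Bornology.IsBounded (unitary 𝔸 : Set 𝔸) := by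
    apply Bornology.IsBounded.subset (Metric.isBounded_closedBall (x := (0:𝔸)) (r := 1))
    intro U hU
    have h1 : star U * U = 1 := (Unitary.mem_iff.mp hU).1
    have h2 : ‖star U * U‖ = ‖U‖ * ‖U‖ := CStarRing.norm_star_mul_self
    have h3 : ‖(1 : 𝔸)‖ ≤ 1 := ContinuousLinearMap.norm_id_le
    rw [h1] at h2
    have : ‖U‖ ≤ 1 := by nlinarith [norm_nonneg U]
    simpa [Metric.mem_closedBall] using this
  have hcompact : IsCompact (unitary 𝔸 : Set 𝔸) := Metric.isCompact_of_isClosed_isBounded hclosed hbdd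
  have hne : (unitary 𝔸 : Set 𝔸).Nonempty := ⟨1, one_mem _⟩
  set φ : 𝔸 → ℝ := fun U => ∑ i, ⟪U (q i), x i⟫ with hφ
  have hφcont : Continuous φ := by
    apply continuous_finset_sum
    intro i _
    exact Continuous.inner ((ContinuousLinearMap.apply ℝ E (q i)).continuous) continuous_const
  obtain ⟨U₀, hU₀mem, hmax⟩ := hcompact.exists_isMaxOn hne hφcont.continuousOn
  have hpres : ∀ a b : E, ⟪U₀ a, U₀ b⟫ = ⟪a, b⟫ := by
    intro a b
    have h1 : star U₀ * U₀ = 1 := (Unitary.mem_iff.mp hU₀mem).1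
    have := ContinuousLinearMap.adjoint_inner_left U₀ b (U₀ a)
    rw [← ContinuousLinearMap.star_eq_adjoint] at this
    have h2 : (star U₀) (U₀ a) = a := by
      rw [← ContinuousLinearMap.mul_apply, h1, ContinuousLinearMap.one_apply]
    rw [h2] at this
    exact this.symm
  refine ⟨fun i => U₀ (q i), fun i j => hpres _ _, ?_, ?_⟩
  · -- distance decreased
    have expand : ∀ z : Fin N → E,
        ∑ i, ‖z i - x i‖ ^ 2
          = ∑ i, (‖z i‖ ^ 2 + ‖x i‖ ^ 2) - 2 * ∑ i, ⟪z i, x i⟫ := by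
      intro z
      rw [Finset.mul_sum, ← Finset.sum_sub_distrib]
      exact Finset.sum_congr rfl fun i _ => by rw [norm_sub_sq_real]; ring
    have hnorm : ∀ i, ‖U₀ (q i)‖ = ‖q i‖ := by
      intro i
      have := hpres (q i) (q i)
      rw [real_inner_self_eq_norm_sq, real_inner_self_eq_norm_sq] at this
      nlinarith [norm_nonneg (U₀ (q i)), norm_nonneg (q i)]
    have h1 : φ 1 ≤ φ U₀ := hmax (one_mem _)
    have h1' : φ 1 = ∑ i, ⟪q i, x i⟫ :=
      Finset.sum_congr rfl fun i _ => by rw [ContinuousLinearMap.one_apply]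
    rw [expand, expand]
    have : ∑ i, (‖U₀ (q i)‖ ^ 2 + ‖x i‖ ^ 2) = ∑ i, (‖q i‖ ^ 2 + ‖x i‖ ^ 2) :=
      Finset.sum_congr rfl fun i _ => by rw [hnorm]
    rw [this]
    have : φ U₀ = ∑ i, ⟪U₀ (q i), x i⟫ := rfl
    linarith [h1, h1'.symm.trans_le h1]
  · -- first-order condition
    intro Ψ hΨ
    have hΨskew : Ψ ∈ skewAdjoint 𝔸 := skewAdjoint.mem_iff.mpr hΨ
    set h : ℝ → ℝ := fun s => ∑ i, ⟪(exp (s • Ψ)) (U₀ (q i)), x i⟫ with hh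
    have hmemexp : ∀ s : ℝ, exp (s • Ψ) * U₀ ∈ unitary 𝔸 := by
      intro s
      refine mul_mem ?_ hU₀mem
      letI : NormedAlgebra ℚ 𝔸 := .restrictScalars ℚ ℝ 𝔸
      apply exp_mem_unitary_of_mem_skewAdjoint
      rw [skewAdjoint.mem_iff, star_smul, skewAdjoint.mem_iff.mp hΨskew]
      simp
    have hval : ∀ s : ℝ, h s = φ (exp (s • Ψ) * U₀) := by
      intro s
      refine Finset.sum_congr rfl fun i _ => ?_
      rw [ContinuousLinearMap.mul_apply]
    have h0 : h 0 = φ U₀ := by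
      rw [hval, zero_smul, exp_zero, one_mul]
    have hloc : IsLocalMax h 0 := by
      apply Filter.Eventually.of_forall
      intro s
      rw [hval, h0]
      exact hmax (hmemexp s)
    have hderiv : HasDerivAt h (∑ i, ⟪Ψ (U₀ (q i)), x i⟫) 0 := by
      apply HasDerivAt.fun_sum
      intro i _
      have hexp : HasDerivAt (fun s : ℝ => exp (s • Ψ)) Ψ 0 := by
        have := hasDerivAt_exp_smul_const (𝕂 := ℝ) Ψ (0 : ℝ)
        simpa using this
      have happ : HasDerivAt (fun s : ℝ => (exp (s • Ψ)) (U₀ (q i))) (Ψ (U₀ (q i))) 0 := by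
        have := hexp.clm_apply (hasDerivAt_const (0:ℝ) (U₀ (q i)))
        simpa using this
      have := happ.inner ℝ (hasDerivAt_const (0:ℝ) (x i))
      simpa using this
    exact hloc.hasDerivAt_eq_zero hderiv

theorem skew_inner_self {E : Type*} [NormedAddCommGroup E] [InnerProductSpace ℝ E]
    [FiniteDimensional ℝ E] (Ψ : E →L[ℝ] E) (hΨ : star Ψ = -Ψ) (v : E) : ⟪Ψ v, v⟫ = 0 := by
  haveI : CompleteSpace E := FiniteDimensional.complete ℝ E
  have h1 : ⟪(star Ψ) v, v⟫ = ⟪v, Ψ v⟫ := by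
    rw [ContinuousLinearMap.star_eq_adjoint]
    exact ContinuousLinearMap.adjoint_inner_left Ψ v v
  rw [hΨ, ContinuousLinearMap.neg_apply, inner_neg_left, real_inner_comm] at h1
  have h2 : ⟪v, Ψ v⟫ = (0:ℝ) := by linarith
  rw [real_inner_comm]
  exact h2

theorem localJam {E : Type*} [NormedAddCommGroup E] [InnerProductSpace ℝ E]
    [FiniteDimensional ℝ E] {N : ℕ} (x : Fin N → E) (hunit : ∀ i, ‖x i‖ = 1)
    (m : ℝ)
    (hjam : ∀ y : Fin N → E,
      (∀ i, ⟪x i, y i⟫ = 0) →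
      (∀ i j, i ≠ j → ⟪x i, x j⟫ = m → ⟪x i, y j⟫ + ⟪x j, y i⟫ ≤ 0) →
      ∃ Φ : E →ₗ[ℝ] E,
        (∀ u v, ⟪Φ u, v⟫ = -⟪u, Φ v⟫) ∧ ∀ i, y i = Φ (x i)) :
    ∃ ε > 0, ∀ q : Fin N → E, (∀ i, ‖q i‖ = 1) →
      (∀ i j, i ≠ j → ⟪q i, q j⟫ ≤ m) → dist q x < ε →
      ∀ i j, ⟪q i, q j⟫ = ⟪x i, x j⟫ := by
  classical
  by_contra hcon
  push_neg at hcon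
  have hstep : ∀ k : ℕ, ∃ d : Fin N → E,
      d ≠ 0 ∧
      (∀ i, 2 * ⟪x i, d i⟫ + ‖d i‖ ^ 2 = 0) ∧
      (∀ i j, i ≠ j → ⟪x i, x j⟫ = m →
        ⟪x i, d j⟫ + ⟪x j, d i⟫ + ⟪d i, d j⟫ ≤ 0) ∧
      (∀ Ψ : E →L[ℝ] E, star Ψ = -Ψ → ∑ i, ⟪Ψ (d i), x i⟫ = 0) ∧
      ‖d‖ ≤ Real.sqrt N * (1 / (k + 1)) := by
    intro k
    obtain ⟨q, hq1, hq2, hqdist, i₀, j₀, hne0⟩ :=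
      hcon (1 / (k + 1)) (by positivity)
    obtain ⟨q', hg, hsum, hstat⟩ := procrustes x q
    refine ⟨fun i => q' i - x i, ?_, ?_, ?_, ?_, ?_⟩
    · intro h0
      apply hne0
      have hq'x : ∀ i, q' i = x i := by
        intro i
        have := congrFun h0 i
        simpa [sub_eq_zero] using this
      rw [← hg i₀ j₀, hq'x i₀, hq'x j₀]
    · intro i
      have h1 : ⟪q' i, q' i⟫ = (1 : ℝ) := by
        rw [hg i i, real_inner_self_eq_norm_sq, hq1 i]; norm_num
      have h2 : q' i = x i + (q' i - x i) := by abel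
      rw [h2, inner_add_add_self, real_inner_self_eq_norm_sq, hunit i] at h1
      rw [real_inner_self_eq_norm_sq] at h1
      have hcomm := real_inner_comm (x i) (q' i - x i)
      show 2 * ⟪x i, q' i - x i⟫ + ‖q' i - x i‖ ^ 2 = 0
      linarith
    · intro i j hij hcij
      have h1 : ⟪q' i, q' j⟫ ≤ m := by rw [hg i j]; exact hq2 i j hij
      have h2 : q' i = x i + (q' i - x i) := by abel
      have h3 : q' j = x j + (q' j - x j) := by abel
      rw [h2, h3, inner_add_left, inner_add_right, inner_add_right, hcij] at h1
      have hcomm := real_inner_comm (x j) (q' i - x i)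
      show ⟪x i, q' j - x j⟫ + ⟪x j, q' i - x i⟫ + ⟪q' i - x i, q' j - x j⟫ ≤ 0
      linarith
    · intro Ψ hΨ
      have h1 : ∑ i, ⟪Ψ (q' i), x i⟫ = 0 := hstat Ψ hΨ
      have h2 : ∀ i, ⟪Ψ (q' i - x i), x i⟫ = ⟪Ψ (q' i), x i⟫ - ⟪Ψ (x i), x i⟫ := by
        intro i; rw [map_sub, inner_sub_left]
      have h3 : ∀ i, ⟪Ψ (x i), x i⟫ = 0 := fun i => skew_inner_self Ψ hΨ (x i)
      rw [Finset.sum_congr rfl fun i _ => h2 i, Finset.sum_sub_distrib, h1,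
        Finset.sum_congr rfl fun i _ => h3 i]
      simp
    · -- norm bound
      have hterm : ∀ i, ‖q i - x i‖ ^ 2 ≤ (1 / (k + 1 : ℝ)) ^ 2 := by
        intro i
        have h1 : ‖q i - x i‖ ≤ dist q x := by
          rw [← dist_eq_norm]
          exact dist_le_pi_dist q x i
        have h2 : (0:ℝ) ≤ ‖q i - x i‖ := norm_nonneg _
        nlinarith [hqdist]
      have hsum2 : ∑ i, ‖q' i - x i‖ ^ 2 ≤ N * (1 / (k + 1 : ℝ)) ^ 2 := by
        calc ∑ i, ‖q' i - x i‖ ^ 2 ≤ ∑ i, ‖q i - x i‖ ^ 2 := hsum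
          _ ≤ ∑ _i : Fin N, (1 / (k + 1 : ℝ)) ^ 2 := Finset.sum_le_sum fun i _ => hterm i
          _ = N * (1 / (k + 1 : ℝ)) ^ 2 := by simp [mul_comm]
      have hbound : ∀ i, ‖q' i - x i‖ ≤ Real.sqrt N * (1 / (k + 1)) := by
        intro i
        have h1 : ‖q' i - x i‖ ^ 2 ≤ N * (1 / (k + 1 : ℝ)) ^ 2 := by
          refine le_trans ?_ hsum2
          exact Finset.single_le_sum (fun j _ => sq_nonneg ‖q' j - x j‖) (Finset.mem_univ i)
        have h2 : (0:ℝ) ≤ Real.sqrt N * (1 / (k + 1)) := by positivity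
        have h3 : (Real.sqrt N * (1 / (k + 1 : ℝ))) ^ 2 = N * (1 / (k + 1 : ℝ)) ^ 2 := by
          rw [mul_pow, Real.sq_sqrt (Nat.cast_nonneg N)]
        nlinarith [norm_nonneg (q' i - x i)]
      exact pi_norm_le_iff_of_nonneg (by positivity) |>.mpr hbound
  choose d hdne hP1 hP2 hP3 hPb using hstep
  set b : ℕ → ℝ := fun k => ‖d k‖ with hb
  have hbpos : ∀ k, 0 < b k := fun k => norm_pos_iff.mpr (hdne k)
  have hbto : Filter.Tendsto b Filter.atTop (nhds 0) := by
    apply squeeze_zero (fun k => (hbpos k).le) hPb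
    have := tendsto_one_div_add_atTop_nhds_zero_nat (𝕜 := ℝ)
    simpa using this.const_mul (Real.sqrt N)
  set u : ℕ → Fin N → E := fun k => (b k)⁻¹ • d k with hu
  have humem : ∀ k, u k ∈ Metric.sphere (0 : Fin N → E) 1 := by
    intro k
    rw [mem_sphere_zero_iff_norm, hu]
    rw [norm_smul, norm_inv, Real.norm_eq_abs, abs_of_pos (hbpos k)]
    exact inv_mul_cancel₀ (hbpos k).ne'
  obtain ⟨w, hwmem, ψ, hψmono, hψto⟩ :=
    (isCompact_sphere (0 : Fin N → E) 1).tendsto_subseq humem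
  have hbψto : Filter.Tendsto (fun k => b (ψ k)) Filter.atTop (nhds 0) :=
    hbto.comp hψmono.tendsto_atTop
  have hcoord : ∀ i, Filter.Tendsto (fun k => u (ψ k) i) Filter.atTop (nhds (w i)) := by
    intro i
    exact (tendsto_pi_nhds.mp hψto) i
  have hui : ∀ k i, u k i = (b k)⁻¹ • d k i := fun k i => rfl
  have hdik : ∀ k i, ‖d k i‖ ≤ b k := fun k i => norm_le_pi_norm (d k) i
  -- constraint 1
  have hw1 : ∀ i, ⟪x i, w i⟫ = 0 := by
    intro i
    have hlim : Filter.Tendsto (fun k => ⟪x i, u (ψ k) i⟫) Filter.atTop (nhds ⟪x i, w i⟫) :=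
      Filter.Tendsto.inner tendsto_const_nhds (hcoord i)
    have hlim0 : Filter.Tendsto (fun k => ⟪x i, u (ψ k) i⟫) Filter.atTop (nhds 0) := by
      have hg2 : Filter.Tendsto (fun k => b (ψ k) / 2) Filter.atTop (nhds 0) := by
        simpa using hbψto.div_const 2
      apply squeeze_zero_norm _ hg2
      intro k
      have e1 : ⟪x i, u (ψ k) i⟫ = (b (ψ k))⁻¹ * ⟪x i, d (ψ k) i⟫ := by
        rw [hui]; exact real_inner_smul_right _ _ _
      have e2 : 2 * ⟪x i, d (ψ k) i⟫ + ‖d (ψ k) i‖ ^ 2 = 0 := hP1 (ψ k) i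
      have e3 : ‖d (ψ k) i‖ ≤ b (ψ k) := hdik (ψ k) i
      have e4 : 0 < b (ψ k) := hbpos (ψ k)
      rw [Real.norm_eq_abs, e1, abs_mul, abs_of_pos (inv_pos.mpr e4)]
      have e5 : |⟪x i, d (ψ k) i⟫| = ‖d (ψ k) i‖ ^ 2 / 2 := by
        rw [abs_of_nonpos (by nlinarith [sq_nonneg ‖d (ψ k) i‖])]
        linarith
      rw [e5]
      have e6 : ‖d (ψ k) i‖ ^ 2 ≤ b (ψ k) * b (ψ k) := by nlinarith [norm_nonneg (d (ψ k) i)]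
      calc (b (ψ k))⁻¹ * (‖d (ψ k) i‖ ^ 2 / 2) ≤ (b (ψ k))⁻¹ * (b (ψ k) * b (ψ k) / 2) := by
            apply mul_le_mul_of_nonneg_left _ (inv_pos.mpr e4).le
            linarith
        _ = b (ψ k) / 2 := by field_simp
    exact tendsto_nhds_unique hlim hlim0
  -- constraint 2
  have hw2 : ∀ i j, i ≠ j → ⟪x i, x j⟫ = m → ⟪x i, w j⟫ + ⟪x j, w i⟫ ≤ 0 := by
    intro i j hij hc
    have hlim : Filter.Tendsto (fun k => ⟪x i, u (ψ k) j⟫ + ⟪x j, u (ψ k) i⟫)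
        Filter.atTop (nhds (⟪x i, w j⟫ + ⟪x j, w i⟫)) :=
      (Filter.Tendsto.inner tendsto_const_nhds (hcoord j)).add
        (Filter.Tendsto.inner tendsto_const_nhds (hcoord i))
    refine le_of_tendsto_of_tendsto' hlim hbψto ?_
    intro k
    have e4 : 0 < b (ψ k) := hbpos (ψ k)
    have e1 : ⟪x i, u (ψ k) j⟫ + ⟪x j, u (ψ k) i⟫
        = (b (ψ k))⁻¹ * (⟪x i, d (ψ k) j⟫ + ⟪x j, d (ψ k) i⟫) := by
      rw [hui, hui, real_inner_smul_right, real_inner_smul_right]; ring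
    have e2 : ⟪x i, d (ψ k) j⟫ + ⟪x j, d (ψ k) i⟫ ≤ -⟪d (ψ k) i, d (ψ k) j⟫ := by
      have := hP2 (ψ k) i j hij hc
      linarith
    have e3 : -⟪d (ψ k) i, d (ψ k) j⟫ ≤ b (ψ k) * b (ψ k) := by
      have h5 := abs_real_inner_le_norm (d (ψ k) i) (d (ψ k) j)
      have h6 := hdik (ψ k) i
      have h7 := hdik (ψ k) j
      have h8 := abs_le.mp h5
      nlinarith [norm_nonneg (d (ψ k) i), norm_nonneg (d (ψ k) j)]
    rw [e1]
    calc (b (ψ k))⁻¹ * (⟪x i, d (ψ k) j⟫ + ⟪x j, d (ψ k) i⟫)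
        ≤ (b (ψ k))⁻¹ * (b (ψ k) * b (ψ k)) := by
          apply mul_le_mul_of_nonneg_left _ (inv_pos.mpr e4).le
          linarith
      _ = b (ψ k) := by field_simp
  -- constraint 3
  have hw3 : ∀ Ψ : E →L[ℝ] E, star Ψ = -Ψ → ∑ i, ⟪Ψ (w i), x i⟫ = 0 := by
    intro Ψ hΨ
    have hlim : Filter.Tendsto (fun k => ∑ i, ⟪Ψ (u (ψ k) i), x i⟫)
        Filter.atTop (nhds (∑ i, ⟪Ψ (w i), x i⟫)) := by
      apply tendsto_finset_sum
      intro i _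
      exact Filter.Tendsto.inner ((Ψ.continuous.tendsto _).comp (hcoord i)) tendsto_const_nhds
    have hzero : ∀ k, ∑ i, ⟪Ψ (u k i), x i⟫ = (0:ℝ) := by
      intro k
      have : ∀ i, ⟪Ψ (u k i), x i⟫ = (b k)⁻¹ * ⟪Ψ (d k i), x i⟫ := by
        intro i
        rw [hui, map_smul, real_inner_smul_left]
      rw [Finset.sum_congr rfl fun i _ => this i, ← Finset.mul_sum, hP3 k Ψ hΨ, mul_zero]
    have : Filter.Tendsto (fun k => ∑ i, ⟪Ψ (u (ψ k) i), x i⟫) Filter.atTop (nhds 0) := by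
      simp only [hzero]
      exact tendsto_const_nhds
    exact tendsto_nhds_unique hlim this
  -- apply infinitesimal jamming
  obtain ⟨Φ, hskew, hy⟩ := hjam w hw1 hw2
  haveI : CompleteSpace E := FiniteDimensional.complete ℝ E
  set ΦC : E →L[ℝ] E := LinearMap.toContinuousLinearMap Φ with hΦC
  have hΦCapp : ∀ v, ΦC v = Φ v := fun v => rfl
  have hΦCskew : star ΦC = -ΦC := by
    rw [ContinuousLinearMap.star_eq_adjoint]
    have : -ΦC = ContinuousLinearMap.adjoint ΦC := by
      rw [ContinuousLinearMap.eq_adjoint_iff]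
      intro a c
      rw [ContinuousLinearMap.neg_apply, inner_neg_left, hΦCapp, hΦCapp, hskew a c]
      ring_nf
    rw [← this]
  have hfinal := hw3 ΦC hΦCskew
  have : ∀ i, ⟪ΦC (w i), x i⟫ = -⟪w i, w i⟫ := by
    intro i
    rw [hΦCapp, hskew (w i) (x i), ← hy i]
  rw [Finset.sum_congr rfl fun i _ => this i] at hfinal
  have hsumzero : ∑ i, ⟪w i, w i⟫ = (0:ℝ) := by
    have := hfinal
    rw [Finset.sum_neg_distrib, neg_eq_zero] at this
    exact this
  have hwzero : ∀ i, w i = 0 := by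
    intro i
    have h1 : ∀ j ∈ Finset.univ, (0:ℝ) ≤ ⟪w j, w j⟫ := fun j _ => real_inner_self_nonneg
    have h2 := (Finset.sum_eq_zero_iff_of_nonneg h1).mp hsumzero i (Finset.mem_univ i)
    exact inner_self_eq_zero.mp h2
  have : w = 0 := funext hwzero
  rw [this, mem_sphere_zero_iff_norm, norm_zero] at hwmem
  norm_num at hwmem

theorem statement1 {n N : ℕ} (hN : 2 ≤ N) (x : Fin N → EuclideanSpace ℝ (Fin n))
    (hinj : Function.Injective x) (hunit : ∀ i, ‖x i‖ = 1)
    (m : ℝ)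
    (hm_le : ∀ i j, i ≠ j → ⟪x i, x j⟫ ≤ m)
    (hm_ex : ∃ i j, i ≠ j ∧ ⟪x i, x j⟫ = m)
    (hjam : ∀ y : Fin N → EuclideanSpace ℝ (Fin n),
      (∀ i, ⟪x i, y i⟫ = 0) →
      (∀ i j, i ≠ j → ⟪x i, x j⟫ = m → ⟪x i, y j⟫ + ⟪x j, y i⟫ ≤ 0) →
      ∃ Φ : EuclideanSpace ℝ (Fin n) →ₗ[ℝ] EuclideanSpace ℝ (Fin n),
        (∀ u v, ⟪Φ u, v⟫ = -⟪u, Φ v⟫) ∧ ∀ i, y i = Φ (x i)) :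
    ∀ γ : Set.Icc (0 : ℝ) 1 → Fin N → EuclideanSpace ℝ (Fin n),
      Continuous γ →
      γ ⟨0, by norm_num⟩ = x →
      (∀ t i, ‖γ t i‖ = 1) →
      (∀ t i j, i ≠ j → ⟪γ t i, γ t j⟫ ≤ m) →
      ∀ t i j, ⟪γ t i, γ t j⟫ = ⟪x i, x j⟫ := by
  intro γ hγcont hγ0 hγunit hγle
  set T : Set (Set.Icc (0:ℝ) 1) := {t | ∀ i j, ⟪γ t i, γ t j⟫ = ⟪x i, x j⟫} with hT
  have hclosed : IsClosed T := by
    have hTeq : T = ⋂ i, ⋂ j, {t | ⟪γ t i, γ t j⟫ = ⟪x i, x j⟫} := by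
      ext t; simp [hT, Set.mem_iInter]
    rw [hTeq]
    refine isClosed_iInter fun i => isClosed_iInter fun j => isClosed_eq ?_ continuous_const
    exact Continuous.inner ((continuous_apply i).comp hγcont) ((continuous_apply j).comp hγcont)
  have hopen : IsOpen T := by
    rw [isOpen_iff_mem_nhds]
    intro t₀ ht₀
    obtain ⟨V, hV⟩ := gram_isometry x (γ t₀) (fun i j => ht₀ i j)
    obtain ⟨ε, hεpos, hloc⟩ := localJam x hunit m hjam
    have hFcont : Continuous (fun t => (fun i => V (γ t i))) := by
      apply continuous_pi
      intro i
      exact V.continuous.comp ((continuous_apply i).comp hγcont)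
    have hF0 : (fun i => V (γ t₀ i)) = x := funext fun i => hV i
    have hnb : (fun t => (fun i => V (γ t i))) ⁻¹' Metric.ball x ε ∈ nhds t₀ := by
      apply IsOpen.mem_nhds (Metric.isOpen_ball.preimage hFcont)
      show dist (fun i => V (γ t₀ i)) x < ε
      rw [hF0, dist_self]
      exact hεpos
    apply Filter.mem_of_superset hnb
    intro t ht i j
    have hq1 : ∀ i, ‖V (γ t i)‖ = 1 := fun i => by rw [V.norm_map]; exact hγunit t i
    have hq2 : ∀ i' j', i' ≠ j' → ⟪V (γ t i'), V (γ t j')⟫ ≤ m := fun i' j' hij => by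
      rw [V.inner_map_map]; exact hγle t i' j' hij
    have hout := hloc (fun i => V (γ t i)) hq1 hq2 (by simpa [Metric.mem_ball] using ht) i j
    rw [V.inner_map_map] at hout
    exact hout
  have hne : T.Nonempty := ⟨⟨0, by norm_num⟩, by intro i j; rw [hγ0]⟩
  haveI : PreconnectedSpace (Set.Icc (0:ℝ) 1) := Subtype.preconnectedSpace isPreconnected_Icc
  have huniv : T = Set.univ := IsClopen.eq_univ ⟨hclosed, hopen⟩ hne
  intro t i j
  have ht : t ∈ T := huniv ▸ Set.mem_univ t
  exact ht i j
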